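/- Let α > −1 be real and k ∈ ℕ. For every s ∈ ℂ with Re(s) > 0, ∫_0^∞ e^{−sx} x^α L_k^{(α)}(x) dx = (Γ(α+k+1)/k!) · (s−1)^k / s^{α+k+1}, where s^{α+k+1} is the principal branch. -/

import Mathlib

open MeasureTheory Real Nat Set Filter Topology

lemma lag_norm_aux (a : ℝ) (s : ℂ) {t : ℝ} (ht : 0 < t) :
    ‖Complex.exp (-s * t) * ((t ^ (a - 1) : ℝ) : ℂ)‖ = t ^ (a - 1) * rexp (-s.re * t) := by
  rw [norm_mul, Complex.norm_exp, Complex.norm_real,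
    Real.norm_eq_abs, abs_of_nonneg (rpow_nonneg ht.le _)]
  have : (-s * t).re = -s.re * t := by simp
  rw [this, mul_comm]

lemma lag_integrable_real {b c : ℝ} (hb : -1 < b) (hc : 0 < c) :
    IntegrableOn (fun t : ℝ => t ^ b * rexp (-c * t)) (Ioi 0) := by
  have := integrableOn_rpow_mul_exp_neg_mul_rpow hb (by norm_num : (0:ℝ) < 1) hc
  simpa [rpow_one] using this

lemma lag_integrable (a : ℝ) (ha : 0 < a) (s : ℂ) (hs : 0 < s.re) :
    IntegrableOn (fun t : ℝ => Complex.exp (-s * t) * ((t ^ (a - 1) : ℝ) : ℂ)) (Ioi 0) := by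
  refine Integrable.mono' ((lag_integrable_real (b := a - 1) (by linarith) hs)) ?_ ?_
  · apply ContinuousOn.aestronglyMeasurable ?_ measurableSet_Ioi
    exact (Complex.continuous_exp.comp (continuous_const.mul Complex.continuous_ofReal)).continuousOn.mul
      (Complex.continuous_ofReal.comp_continuousOn
        (continuousOn_id.rpow_const fun x hx => Or.inl (ne_of_gt hx)))
  · filter_upwards [ae_restrict_mem measurableSet_Ioi] with t ht
    rw [lag_norm_aux a s ht]

lemma lag_analytic (a : ℝ) (ha : 0 < a) :
    AnalyticOnNhd ℂ (fun s : ℂ => ∫ t in Ioi (0 : ℝ),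
      Complex.exp (-s * t) * ((t ^ (a - 1) : ℝ) : ℂ)) {s : ℂ | 0 < s.re} := by
  have hopen : IsOpen {s : ℂ | 0 < s.re} := isOpen_lt continuous_const Complex.continuous_re
  refine DifferentiableOn.analyticOnNhd (fun s hs => ?_) hopen
  have hs' : 0 < s.re := hs
  set ε := s.re / 2 with hε
  have hε0 : 0 < ε := by positivity
  have key := hasDerivAt_integral_of_dominated_loc_of_deriv_le (μ := volume.restrict (Ioi 0))
    (F := fun (z : ℂ) (t : ℝ) => Complex.exp (-z * t) * ((t ^ (a - 1) : ℝ) : ℂ))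
    (F' := fun (z : ℂ) (t : ℝ) => (-t) * (Complex.exp (-z * t) * ((t ^ (a - 1) : ℝ) : ℂ)))
    (x₀ := s) (bound := fun t : ℝ => t ^ a * rexp (-ε * t)) (Metric.ball_mem_nhds s hε0) ?_ ?_ ?_ ?_ ?_ ?_
  · exact (key.2.differentiableAt).differentiableWithinAt
  · filter_upwards [hopen.mem_nhds hs] with z hz
    exact (lag_integrable a ha z hz).aestronglyMeasurable
  · exact lag_integrable a ha s hs'
  · exact (Complex.continuous_ofReal.neg.aestronglyMeasurable.restrict).mul
      (lag_integrable a ha s hs').aestronglyMeasurable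
  · -- bound
    filter_upwards [ae_restrict_mem measurableSet_Ioi] with t ht z hz
    have : ‖(-t : ℂ) * (Complex.exp (-z * t) * ((t ^ (a - 1) : ℝ) : ℂ))‖
        = t * (t ^ (a - 1) * rexp (-z.re * t)) := by
      rw [norm_mul, lag_norm_aux a z ht]
      simp [abs_of_nonneg (le_of_lt (show (0:ℝ) < t from ht))]
    rw [this]
    have h1 : t * t ^ (a - 1) = t ^ a := by
      have h2 := Real.rpow_add ht 1 (a - 1)
      rw [Real.rpow_one, show (1 : ℝ) + (a - 1) = a by ring] at h2
      rw [← h2]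
    have hz2 : ε ≤ z.re := by
      have hzs : ‖z - s‖ < ε := by
        rwa [Metric.mem_ball, Complex.dist_eq] at hz
      have : |z.re - s.re| < ε := by
        calc |z.re - s.re| = |(z - s).re| := by simp
        _ ≤ ‖z - s‖ := Complex.abs_re_le_norm _
        _ < ε := hzs
      have := abs_lt.mp this
      simp only [hε] at *
      linarith [this.1]
    calc t * (t ^ (a - 1) * rexp (-z.re * t)) = t ^ a * rexp (-z.re * t) := by
          rw [← mul_assoc, h1]
      _ ≤ t ^ a * rexp (-ε * t) :=
          mul_le_mul_of_nonneg_left (Real.exp_le_exp.mpr (by nlinarith [mul_le_mul_of_nonneg_right hz2 ht.le])) (rpow_nonneg ht.le a)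
  · exact lag_integrable_real (by linarith) hε0
  · -- h_diff
    filter_upwards [ae_restrict_mem measurableSet_Ioi] with t ht z hz
    have : HasDerivAt (fun z : ℂ => Complex.exp (-z * t)) ((-t) * Complex.exp (-z * t)) z := by
      have := ((hasDerivAt_id z).neg.mul_const (t : ℂ)).cexp
      simpa [mul_comm] using this
    simpa [mul_assoc, mul_comm, mul_left_comm] using this.mul_const ((t ^ (a - 1) : ℝ) : ℂ)

lemma laplace_rpow (a : ℝ) (ha : 0 < a) (s : ℂ) (hs : 0 < s.re) :
    ∫ t in Ioi (0 : ℝ), Complex.exp (-s * t) * ((t ^ (a - 1) : ℝ) : ℂ)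
      = (Real.Gamma a : ℂ) / s ^ (a : ℂ) := by
  have hopen : IsOpen {s : ℂ | 0 < s.re} := isOpen_lt continuous_const Complex.continuous_re
  have hG : AnalyticOnNhd ℂ (fun s : ℂ => (Real.Gamma a : ℂ) / s ^ (a : ℂ)) {s : ℂ | 0 < s.re} := by
    refine DifferentiableOn.analyticOnNhd (fun z hz => ?_) hopen
    have hz' : 0 < z.re := hz
    have hz0 : z ≠ 0 := fun h => by rw [h] at hz'; simp at hz'
    have hne : z ^ (a : ℂ) ≠ 0 := by
      simp [Complex.cpow_eq_zero_iff, hz0]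
    exact ((differentiableAt_const _).div
      ((differentiableAt_id.cpow (differentiableAt_const _)) (Or.inl hz')) hne).differentiableWithinAt
  have hreal : ∀ r : ℝ, 0 < r →
      (∫ t in Ioi (0 : ℝ), Complex.exp (-(r : ℂ) * t) * ((t ^ (a - 1) : ℝ) : ℂ))
        = (Real.Gamma a : ℂ) / (r : ℂ) ^ (a : ℂ) := by
    intro r hr
    have h := Complex.integral_cpow_mul_exp_neg_mul_Ioi (a := (a : ℂ)) (r := r) (by simpa using ha) hr
    have hcongr : ∀ t ∈ Ioi (0 : ℝ),
        Complex.exp (-(r : ℂ) * t) * ((t ^ (a - 1) : ℝ) : ℂ)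
          = (t : ℂ) ^ ((a : ℂ) - 1) * Complex.exp (-((r : ℝ) * t)) := by
      intro t ht
      rw [Complex.ofReal_cpow (le_of_lt ht)]
      push_cast
      ring_nf
    rw [setIntegral_congr_fun measurableSet_Ioi hcongr]
    rw [show ∫ t in Ioi (0:ℝ), (t : ℂ) ^ ((a : ℂ) - 1) * Complex.exp (-((r : ℝ) * t))
        = (1 / (r : ℂ)) ^ (a : ℂ) * Complex.Gamma (a : ℂ) from h]
    have harg : Complex.arg (r : ℂ) ≠ π := by
      rw [Complex.arg_ofReal_of_nonneg hr.le]
      exact Ne.symm Real.pi_ne_zero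
    rw [one_div, Complex.inv_cpow _ _ harg, Complex.Gamma_ofReal, inv_mul_eq_div]
  have hrtend : Tendsto (fun n : ℕ => (1 + 1 / ((n : ℝ) + 1) : ℝ)) atTop (𝓝 1) := by
    simpa using (tendsto_const_nhds : Tendsto (fun _ : ℕ => (1:ℝ)) atTop (𝓝 1)).add (tendsto_one_div_add_atTop_nhds_zero_nat (𝕜 := ℝ))
  have hu : Tendsto (fun n : ℕ => ((1 + 1 / ((n : ℝ) + 1) : ℝ) : ℂ)) atTop (𝓝[≠] (1 : ℂ)) := by
    rw [tendsto_nhdsWithin_iff]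
    constructor
    · have h1 := (Complex.continuous_ofReal.tendsto (1 : ℝ)).comp hrtend
      rw [Complex.ofReal_one] at h1
      exact h1
    · filter_upwards with n
      simp only [Set.mem_compl_iff, Set.mem_singleton_iff]
      intro h
      have : (1 + 1 / ((n : ℝ) + 1) : ℝ) = 1 := by exact_mod_cast h
      have hpos : 0 < 1 / ((n : ℝ) + 1) := by positivity
      linarith
  have hfreq : ∃ᶠ z in nhdsWithin (1 : ℂ) {(1 : ℂ)}ᶜ,
      (fun s : ℂ => ∫ t in Ioi (0 : ℝ), Complex.exp (-s * t) * ((t ^ (a - 1) : ℝ) : ℂ)) z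
        = (fun s : ℂ => (Real.Gamma a : ℂ) / s ^ (a : ℂ)) z := by
    refine hu.frequently (Filter.Eventually.of_forall fun n => ?_).frequently
    exact hreal _ (by positivity)
  have heq := (lag_analytic a ha).eqOn_of_preconnected_of_frequently_eq hG
    (convex_halfSpace_re_gt 0).isPreconnected (by simp : (1:ℂ) ∈ {s : ℂ | 0 < s.re}) hfreq
  exact heq hs

lemma laplace_rpow' (b : ℝ) (hb : -1 < b) (s : ℂ) (hs : 0 < s.re) :
    ∫ t in Ioi (0 : ℝ), Complex.exp (-s * t) * ((t ^ b : ℝ) : ℂ)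
      = (Real.Gamma (b + 1) : ℂ) / s ^ ((b + 1 : ℝ) : ℂ) := by
  have h := laplace_rpow (b + 1) (by linarith) s hs
  rwa [show b + 1 - 1 = b by ring] at h

lemma lag_integrable' (b : ℝ) (hb : -1 < b) (s : ℂ) (hs : 0 < s.re) :
    IntegrableOn (fun t : ℝ => Complex.exp (-s * t) * ((t ^ b : ℝ) : ℂ)) (Ioi 0) := by
  have h := lag_integrable (b + 1) (by linarith) s hs
  rwa [show b + 1 - 1 = b by ring] at h

/-- The generalized Laguerre polynomial
`L_k^{(α)}(x) = Σ_{j=0}^{k} (Γ(k+α+1)/Γ(j+α+1)) · (−x)^j/((k−j)!·j!)`. -/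
noncomputable def laguerre (α : ℝ) (k : ℕ) (x : ℝ) : ℝ :=
  ∑ j ∈ Finset.range (k + 1),
    Real.Gamma ((k : ℝ) + α + 1) / Real.Gamma ((j : ℝ) + α + 1) * (-x) ^ j /
      (((k - j)! : ℝ) * (j ! : ℝ))

/-- For `α > −1`, `k ∈ ℕ` and `s ∈ ℂ` with `Re(s) > 0`,
`∫_0^∞ e^{−sx} x^α L_k^{(α)}(x) dx = (Γ(α+k+1)/k!) · (s−1)^k / s^{α+k+1}`,
where `s^{α+k+1}` is the principal branch. -/
theorem laplace_laguerre (α : ℝ) (hα : -1 < α) (k : ℕ) (s : ℂ) (hs : 0 < s.re) :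
    ∫ x in Set.Ioi (0 : ℝ),
        Complex.exp (-s * (x : ℂ)) * (((x : ℝ) ^ α : ℝ) : ℂ) * ((laguerre α k x : ℝ) : ℂ) =
      ((Real.Gamma (α + (k : ℝ) + 1) / (k ! : ℝ) : ℝ) : ℂ) * (s - 1) ^ k /
        s ^ (((α + (k : ℝ) + 1 : ℝ)) : ℂ) := by
  have hsne : s ≠ 0 := fun h => by rw [h] at hs; simp at hs
  set C : ℕ → ℂ := fun j =>
    ((Real.Gamma ((k : ℝ) + α + 1) / Real.Gamma ((j : ℝ) + α + 1) * (-1) ^ j /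
      (((k - j)! : ℝ) * (j ! : ℝ)) : ℝ) : ℂ) with hC
  have hint : ∀ x ∈ Ioi (0 : ℝ),
      Complex.exp (-s * (x : ℂ)) * (((x : ℝ) ^ α : ℝ) : ℂ) * ((laguerre α k x : ℝ) : ℂ)
        = ∑ j ∈ Finset.range (k + 1),
            C j * (Complex.exp (-s * x) * ((x ^ (α + j) : ℝ) : ℂ)) := by
    intro x hx
    have hx0 : (0 : ℝ) < x := hx
    unfold laguerre
    push_cast
    rw [Finset.mul_sum]
    refine Finset.sum_congr rfl fun j hj => ?_
    have hxp : ((x : ℝ) ^ (α + (j : ℝ)) : ℝ) = x ^ α * x ^ (j : ℕ) := by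
      rw [Real.rpow_add hx0, Real.rpow_natCast]
    have : ((x ^ (α + (j : ℕ)) : ℝ) : ℂ) = ((x ^ α : ℝ) : ℂ) * ((x : ℂ)) ^ (j : ℕ) := by
      push_cast [hxp]
      ring
    rw [hC]
    push_cast [this]
    ring
  rw [setIntegral_congr_fun measurableSet_Ioi hint]
  rw [integral_finset_sum]
  · have hterm : ∀ j ∈ Finset.range (k + 1),
        (∫ x in Ioi (0 : ℝ), C j * (Complex.exp (-s * x) * ((x ^ (α + j) : ℝ) : ℂ)))
          = ((Real.Gamma (α + (k : ℝ) + 1) / (k ! : ℝ) : ℝ) : ℂ) / s ^ ((α + (k : ℝ) + 1 : ℝ) : ℂ)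
            * ((-1 : ℂ) ^ j * s ^ (k - j) * (k.choose j : ℂ)) := by
      intro j hj
      have hjk : j ≤ k := Nat.lt_succ_iff.mp (Finset.mem_range.mp hj)
      rw [integral_const_mul,
        laplace_rpow' (α + j) (by have : (0:ℝ) ≤ j := Nat.cast_nonneg j; linarith) s hs]
      have hgj : (0 : ℝ) < Real.Gamma ((j : ℝ) + α + 1) := by
        apply Real.Gamma_pos_of_pos
        have : (0:ℝ) ≤ j := Nat.cast_nonneg j
        linarith
      have hgc : Real.Gamma (α + (j : ℝ) + 1) = Real.Gamma ((j : ℝ) + α + 1) := by ring_nf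
      have hgck : Real.Gamma (α + (k : ℝ) + 1) = Real.Gamma ((k : ℝ) + α + 1) := by ring_nf
      have hXj : s ^ ((α + (j : ℝ) + 1 : ℝ) : ℂ) ≠ 0 := by
        simp [Complex.cpow_eq_zero_iff, hsne]
      have hpow : s ^ ((α + (k : ℝ) + 1 : ℝ) : ℂ)
          = s ^ ((α + (j : ℝ) + 1 : ℝ) : ℂ) * s ^ (k - j : ℕ) := by
        rw [← Complex.cpow_natCast s (k - j), ← Complex.cpow_add _ _ hsne]
        congr 1
        push_cast [Nat.cast_sub hjk]
        ring
      have hsk : (s : ℂ) ^ (k - j) ≠ 0 := pow_ne_zero _ hsne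
      have hfactR : ((k.choose j : ℝ)) * (j ! : ℝ) * ((k - j)! : ℝ) = (k ! : ℝ) := by
        exact_mod_cast Nat.choose_mul_factorial_mul_factorial hjk
      have hkey : (Real.Gamma ((k : ℝ) + α + 1) / Real.Gamma ((j : ℝ) + α + 1) * (-1) ^ j /
            (((k - j)! : ℝ) * (j ! : ℝ)) * Real.Gamma (α + (j : ℝ) + 1) : ℝ)
          = Real.Gamma (α + (k : ℝ) + 1) / (k ! : ℝ) * (-1) ^ j * (k.choose j : ℝ) := by
        rw [hgc, hgck, ← hfactR]
        have h1 : ((k - j)! : ℝ) ≠ 0 := by exact_mod_cast Nat.factorial_ne_zero _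
        have h2 : ((j)! : ℝ) ≠ 0 := by exact_mod_cast Nat.factorial_ne_zero _
        have h3 : ((k.choose j : ℝ)) ≠ 0 := by exact_mod_cast (Nat.choose_pos hjk).ne'
        field_simp
      have hmain : C j * ((Real.Gamma (α + (j : ℝ) + 1) : ℝ) : ℂ)
          = ((Real.Gamma (α + (k : ℝ) + 1) / (k ! : ℝ) : ℝ) : ℂ) * (-1) ^ j
              * (k.choose j : ℂ) := by
        rw [hC]
        have := congrArg (fun r : ℝ => (r : ℂ)) hkey
        push_cast at this ⊢
        convert this using 1 <;> ring
      calc C j * (((Real.Gamma (α + (j : ℝ) + 1) : ℝ) : ℂ) / s ^ ((α + (j : ℝ) + 1 : ℝ) : ℂ))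
          = (((Real.Gamma (α + (k : ℝ) + 1) / (k ! : ℝ) : ℝ) : ℂ) * (-1) ^ j
              * (k.choose j : ℂ)) / s ^ ((α + (j : ℝ) + 1 : ℝ) : ℂ) := by
            rw [← mul_div_assoc, hmain]
        _ = ((Real.Gamma (α + (k : ℝ) + 1) / (k ! : ℝ) : ℝ) : ℂ) / s ^ ((α + (k : ℝ) + 1 : ℝ) : ℂ)
            * ((-1 : ℂ) ^ j * s ^ (k - j) * (k.choose j : ℂ)) := by
          rw [hpow, div_mul_eq_mul_div, div_eq_div_iff hXj (mul_ne_zero hXj hsk)]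
          ring
    rw [Finset.sum_congr rfl hterm, ← Finset.mul_sum, ← add_pow]
    ring
  · intro j hj
    refine (lag_integrable' (α + j) ?_ s hs).const_mul _
    have : (0:ℝ) ≤ j := Nat.cast_nonneg j
    linarith
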